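/- Let G be a second countable, unimodular, locally compact group with Haar measure, σ a 2-cocycle on G, Γ a discrete subgroup of G, and B ⊆ G a Borel fundamental domain for Γ. If (e_i)_{i∈I} is an orthonormal basis of L²(B) and ẽ_i ∈ L²(G) denotes the extension of e_i to G by zero outside B, then the family (λ_σ^G(γ) ẽ_i)_{γ ∈ Γ, i ∈ I} is an orthonormal basis of L²(G). -/

import Mathlib

open MeasureTheory
open scoped ENNReal ComplexConjugate

/-- if `(e_i)` is an orthonormal basis of `L²(B)` for a Borel fundamental
domain `B` of a discrete subgroup `Γ` of `G`, and `ẽ_i` denotes the extension of `e_i`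
by zero, then `(λ_σ^G(γ) ẽ_i)_{γ ∈ Γ, i ∈ I}` is an orthonormal basis of `L²(G)`. -/
theorem twisted_translates_of_onb_fundamental_domain {G : Type*} [Group G]
    [TopologicalSpace G] [IsTopologicalGroup G] [LocallyCompactSpace G]
    [SecondCountableTopology G] [MeasurableSpace G] [BorelSpace G]
    (μ : Measure G) [μ.IsHaarMeasure] [μ.IsMulRightInvariant]
    (σ : G → G → ℂ)
    (hσ_unit : ∀ x y, ‖σ x y‖ = 1)
    (hσ_meas : Measurable fun p : G × G => σ p.1 p.2)
    (hσ_cocycle : ∀ x y z, σ x y * σ (x * y) z = σ x (y * z) * σ y z)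
    (hσ_one : σ 1 1 = 1)
    -- Γ is a discrete subgroup with Borel fundamental domain B
    (Γ : Subgroup G) [DiscreteTopology Γ]
    (B : Set G) (hBmeas : MeasurableSet B)
    (hB : ∀ x : G, ∃! γ : Γ, (γ : G)⁻¹ * x ∈ B)
    -- the σ-projective left regular representation of G on L²(G)
    (lamG : G → (Lp ℂ 2 μ →L[ℂ] Lp ℂ 2 μ))
    (hlamG : ∀ (x : G) (f : Lp ℂ 2 μ),
      (lamG x f : G → ℂ) =ᵐ[μ] fun y => σ x (x⁻¹ * y) * f (x⁻¹ * y))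
    -- an orthonormal basis (e_i) of L²(B) and the extensions ẽ_i by zero
    {ι : Type*} (e : HilbertBasis ι ℂ (Lp ℂ 2 (μ.restrict B)))
    (te : ι → Lp ℂ 2 μ)
    (hte : ∀ i : ι, (te i : G → ℂ) =ᵐ[μ] B.indicator (e i : G → ℂ)) :
    -- the family (λ_σ^G(γ) ẽ_i) is an orthonormal basis of L²(G)
    Orthonormal ℂ (fun p : Γ × ι => lamG (p.1 : G) (te p.2)) ∧
      (Submodule.span ℂ
        (Set.range fun p : Γ × ι => lamG (p.1 : G) (te p.2))).topologicalClosure = ⊤ := by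
  classical
  have hcnt : Countable Γ := TopologicalSpace.separableSpace_iff_countable.mp inferInstance
  have hmp : ∀ g : G, MeasurePreserving (fun y : G => g * y) μ μ := fun g =>
    measurePreserving_mul_left μ g
  have hemb : ∀ g : G, MeasurableEmbedding (fun y : G => g * y) := fun g =>
    (MeasurableEquiv.mulLeft g).measurableEmbedding
  -- distinct translates of B are disjoint
  have hdisj : ∀ γ γ' : Γ, γ ≠ γ' → ∀ y : G,
      (γ : G)⁻¹ * y ∈ B → (γ' : G)⁻¹ * y ∈ B → False := by
    intro γ γ' hne y h1 h2
    exact hne ((hB y).unique h1 h2)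
  -- concrete a.e. form of the translated vectors
  have key : ∀ (x : G) (i : ι), (lamG x (te i) : G → ℂ) =ᵐ[μ]
      fun y => σ x (x⁻¹ * y) * B.indicator (e i : G → ℂ) (x⁻¹ * y) := by
    intro x i
    have h2 : ∀ᵐ y ∂μ, (te i : G → ℂ) (x⁻¹ * y) = B.indicator (e i : G → ℂ) (x⁻¹ * y) :=
      ((hmp x⁻¹).quasiMeasurePreserving.tendsto_ae).eventually (hte i)
    filter_upwards [hlamG x (te i), h2] with y hy1 hy2
    rw [hy1, hy2]
  -- inner products between translated vectors, concretely
  have hinner : ∀ (x x' : G) (i j : ι),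
      (inner ℂ (lamG x (te i)) (lamG x' (te j)) : ℂ) =
        ∫ y, conj (σ x (x⁻¹ * y) * B.indicator (e i : G → ℂ) (x⁻¹ * y)) *
          (σ x' (x'⁻¹ * y) * B.indicator (e j : G → ℂ) (x'⁻¹ * y)) ∂μ := by
    intro x x' i j
    rw [L2.inner_def]
    refine integral_congr_ae ?_
    filter_upwards [key x i, key x' j] with y h1 h2
    rw [RCLike.inner_apply, h1, h2]
    ring
  -- diagonal case
  have hdiag : ∀ (x : G) (i j : ι),
      (inner ℂ (lamG x (te i)) (lamG x (te j)) : ℂ) = if i = j then 1 else 0 := by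
    intro x i j
    rw [hinner x x i j]
    have hcomp := (hmp x).integral_comp (hemb x)
      (fun y => conj (σ x (x⁻¹ * y) * B.indicator (e i : G → ℂ) (x⁻¹ * y)) *
        (σ x (x⁻¹ * y) * B.indicator (e j : G → ℂ) (x⁻¹ * y)))
    rw [← hcomp]
    have heq : ∀ z : G,
        conj (σ x (x⁻¹ * (x * z)) * B.indicator (e i : G → ℂ) (x⁻¹ * (x * z))) *
          (σ x (x⁻¹ * (x * z)) * B.indicator (e j : G → ℂ) (x⁻¹ * (x * z))) =
        B.indicator (fun z => conj ((e i : G → ℂ) z) * (e j : G → ℂ) z) z := by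
      intro z
      rw [inv_mul_cancel_left]
      by_cases hz : z ∈ B
      · simp only [Set.indicator_of_mem hz, map_mul]
        rw [mul_mul_mul_comm]
        have h1 : conj (σ x z) * σ x z = 1 := by
          have h := RCLike.conj_mul (σ x z)
          rw [hσ_unit x z] at h
          simpa using h
        rw [h1, one_mul]
      · simp [Set.indicator_of_notMem hz]
    simp_rw [heq]
    rw [integral_indicator hBmeas]
    have hon := orthonormal_iff_ite.mp e.orthonormal i j
    rw [L2.inner_def] at hon
    rw [← hon]
    refine integral_congr_ae (Filter.Eventually.of_forall fun z => ?_)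
    simp only [RCLike.inner_apply]
    ring
  -- off-diagonal case
  have hoff : ∀ (γ γ' : Γ) (i j : ι), γ ≠ γ' →
      (inner ℂ (lamG (γ : G) (te i)) (lamG (γ' : G) (te j)) : ℂ) = 0 := by
    intro γ γ' i j hne
    rw [hinner]
    have hzero : ∀ y : G,
        conj (σ (γ : G) ((γ : G)⁻¹ * y) * B.indicator (e i : G → ℂ) ((γ : G)⁻¹ * y)) *
          (σ (γ' : G) ((γ' : G)⁻¹ * y) * B.indicator (e j : G → ℂ) ((γ' : G)⁻¹ * y)) = 0 := by
      intro y
      by_cases h1 : (γ : G)⁻¹ * y ∈ B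
      · have h2 : (γ' : G)⁻¹ * y ∉ B := fun h => hdisj γ γ' hne y h1 h
        simp [Set.indicator_of_notMem h2]
      · simp [Set.indicator_of_notMem h1]
    simp_rw [hzero]
    exact integral_zero _ _
  constructor
  · rw [orthonormal_iff_ite]
    rintro ⟨γ, i⟩ ⟨γ', j⟩
    by_cases hγ : γ = γ'
    · subst hγ
      rw [hdiag]
      simp [Prod.ext_iff]
    · rw [hoff γ γ' i j hγ]
      simp [Prod.ext_iff, hγ]
  · rw [Submodule.topologicalClosure_eq_top_iff, Submodule.eq_bot_iff]
    intro f hf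
    have hip : ∀ (γ : Γ) (i : ι), (inner ℂ (lamG (γ : G) (te i)) f : ℂ) = 0 := fun γ i =>
      Submodule.inner_right_of_mem_orthogonal
        (Submodule.subset_span (Set.mem_range_self (γ, i))) hf
    have main : ∀ γ : Γ, ∀ᵐ y ∂μ, (γ : G)⁻¹ * y ∈ B → (f : G → ℂ) y = 0 := by
      intro γ
      set x : G := (γ : G) with hx
      have hmeasσ : AEStronglyMeasurable (fun z : G => conj (σ x z)) (μ.restrict B) := by
        have hm : Measurable fun z : G => σ x z :=
          hσ_meas.comp (measurable_const.prodMk measurable_id)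
        exact (continuous_star.measurable.comp hm).aestronglyMeasurable.restrict
      have hF : MemLp (fun z => (f : G → ℂ) (x * z)) 2 μ :=
        (Lp.memLp f).comp_measurePreserving (hmp x)
      have hg : MemLp (fun z => conj (σ x z) * (f : G → ℂ) (x * z)) 2 (μ.restrict B) := by
        refine MemLp.of_le (hF.restrict B)
          (hmeasσ.mul (hF.restrict B).aestronglyMeasurable) ?_
        refine Filter.Eventually.of_forall fun z => ?_
        rw [norm_mul, RCLike.norm_conj, hσ_unit, one_mul]
      set g : Lp ℂ 2 (μ.restrict B) := hg.toLp _ with hgdef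
      have hcoe : (g : G → ℂ) =ᵐ[μ.restrict B]
          fun z => conj (σ x z) * (f : G → ℂ) (x * z) := hg.coeFn_toLp
      have hz : ∀ i : ι, (inner ℂ (e i) g : ℂ) = 0 := by
        intro i
        have h1 : (inner ℂ (lamG x (te i)) f : ℂ) =
            ∫ y, conj (σ x (x⁻¹ * y) * B.indicator (e i : G → ℂ) (x⁻¹ * y)) *
              (f : G → ℂ) y ∂μ := by
          rw [L2.inner_def]
          refine integral_congr_ae ?_
          filter_upwards [key x i] with y hy
          rw [RCLike.inner_apply, hy]
          ring
        have h2 := (hmp x).integral_comp (hemb x)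
          (fun y => conj (σ x (x⁻¹ * y) * B.indicator (e i : G → ℂ) (x⁻¹ * y)) *
            (f : G → ℂ) y)
        have h3 : ∀ z : G,
            conj (σ x (x⁻¹ * (x * z)) * B.indicator (e i : G → ℂ) (x⁻¹ * (x * z))) *
              (f : G → ℂ) (x * z) =
            B.indicator (fun z => conj ((e i : G → ℂ) z) *
              (conj (σ x z) * (f : G → ℂ) (x * z))) z := by
          intro z
          rw [inv_mul_cancel_left]
          by_cases hzB : z ∈ B
          · simp only [Set.indicator_of_mem hzB, map_mul]
            ring
          · simp [Set.indicator_of_notMem hzB]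
        have h4 : (inner ℂ (e i) g : ℂ) = (inner ℂ (lamG x (te i)) f : ℂ) := by
          rw [L2.inner_def, h1, ← h2]
          simp_rw [h3]
          rw [integral_indicator hBmeas]
          refine integral_congr_ae ?_
          filter_upwards [hcoe] with z hzz
          simp only [RCLike.inner_apply]
          rw [hzz]
          ring
        rw [h4]
        exact hip γ i
      have hg0 : g = 0 := by
        have hrepr : e.repr g = 0 := by
          ext i
          simp only [e.repr_apply_apply, hz i]
          rfl
        simpa using e.repr.map_eq_zero_iff.mp hrepr
      have hae0 : (fun z => conj (σ x z) * (f : G → ℂ) (x * z)) =ᵐ[μ.restrict B] 0 := by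
        refine hcoe.symm.trans ?_
        rw [hg0]
        exact Lp.coeFn_zero ℂ 2 (μ.restrict B)
      have hfz : ∀ᵐ z ∂(μ.restrict B), (f : G → ℂ) (x * z) = 0 := by
        filter_upwards [hae0] with z hzz
        have hσne : conj (σ x z) ≠ 0 := by
          intro h
          have hnorm : ‖conj (σ x z)‖ = 1 := by rw [RCLike.norm_conj, hσ_unit]
          rw [h] at hnorm
          simp at hnorm
        have : conj (σ x z) * (f : G → ℂ) (x * z) = 0 := hzz
        exact (mul_eq_zero.mp this).resolve_left hσne
      rw [ae_restrict_iff' hBmeas] at hfz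
      have htrans := ((hmp x⁻¹).quasiMeasurePreserving.tendsto_ae).eventually hfz
      filter_upwards [htrans] with y hy hyB
      have := hy hyB
      rwa [mul_inv_cancel_left] at this
    have hall : ∀ᵐ y ∂μ, ∀ γ : Γ, (γ : G)⁻¹ * y ∈ B → (f : G → ℂ) y = 0 :=
      ae_all_iff.mpr main
    have hfae : (f : G → ℂ) =ᵐ[μ] 0 := by
      filter_upwards [hall] with y hy
      obtain ⟨γ, hγ, -⟩ := hB y
      exact hy γ hγ
    exact Lp.eq_zero_iff_ae_eq_zero.mpr hfae
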